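/- Assume τ_{A1} < τ_{A1}^C and write C(x) = 1 + x/τ_{A1}^C + τ_{A2}/τ_{A2}^C, Q3^∞ = τ_C · C(-τ_{A1}), A1^∞ = -τ_{A1}, and f2^∞ = f2(-τ_{A1}, τ_{A2}) with f2^∞ > 0. Then the 3×3 matrix J with rows (γ2(C(A1^∞) - Q3^∞/τ_C) - f2^∞, 0, 0), (-γ3 Q3^∞/τ_C + f2^∞, γ3(C(A1^∞) - 2Q3^∞/τ_C), γ3 Q3^∞/τ_{A1}^C) and (α2(1 - (A1^∞/τ_{A1})²), -α3(1 - (A1^∞/τ_{A1})²), 2 α3 Q3^∞ A1^∞/τ_{A1}²) has exactly the eigenvalues λ1 = -f2^∞, λ2 = -γ3 C(-τ_{A1}) and λ3 = -2 α3 τ_C C(-τ_{A1})/τ_{A1}, all of which are negative real numbers; in particular, the steady state (0, τ_C C(-τ_{A1}), -τ_{A1}) of the reduced system is linearly stable. -/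

import Mathlib

theorem stmt10
    (γ2 γ3 τC τA1 τA1C τA2 τA2C α2 α3 : ℝ)
    (hγ2 : 0 < γ2) (hγ3 : 0 < γ3) (hτC : 0 < τC) (hτA1 : 0 < τA1)
    (hτA1C : 0 < τA1C) (hτA2 : 0 < τA2) (hτA2C : 0 < τA2C)
    (hα2 : 0 < α2) (hα3 : 0 < α3)
    (hττ : τA1 < τA1C)
    (f2 : ℝ → ℝ → ℝ) (hf2pos : ∀ x y, 0 < f2 x y)
    (Cinf Q3inf A1inf f2inf : ℝ)
    (hCinf : Cinf = 1 + -τA1 / τA1C + τA2 / τA2C)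
    (hQ3inf : Q3inf = τC * Cinf) (hA1inf : A1inf = -τA1)
    (hf2inf : f2inf = f2 (-τA1) τA2) :
    spectrum ℝ
      (!![γ2 * (Cinf - Q3inf / τC) - f2inf, 0, 0;
          -γ3 * Q3inf / τC + f2inf, γ3 * (Cinf - 2 * Q3inf / τC), γ3 * Q3inf / τA1C;
          α2 * (1 - (A1inf / τA1) ^ 2), -α3 * (1 - (A1inf / τA1) ^ 2),
            2 * α3 * Q3inf * A1inf / τA1 ^ 2] : Matrix (Fin 3) (Fin 3) ℝ)
      = {-f2inf, -(γ3 * Cinf), -(2 * α3 * τC * Cinf / τA1)} ∧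
    -f2inf < 0 ∧ -(γ3 * Cinf) < 0 ∧ -(2 * α3 * τC * Cinf / τA1) < 0 := by
  have hd1 : τA1 / τA1C < 1 := (div_lt_one hτA1C).2 hττ
  have hd2 : 0 < τA2 / τA2C := div_pos hτA2 hτA2C
  have hCpos : 0 < Cinf := by rw [hCinf, neg_div]; linarith
  have hf2 : 0 < f2inf := hf2inf ▸ hf2pos _ _
  have e1 : Cinf - Q3inf / τC = 0 := by rw [hQ3inf]; field_simp; ring
  have e2 : (A1inf / τA1) ^ 2 = 1 := by
    rw [hA1inf, neg_div, div_self hτA1.ne', neg_one_sq]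
  have e3 : γ3 * (Cinf - 2 * Q3inf / τC) = -(γ3 * Cinf) := by
    rw [hQ3inf]; field_simp; ring
  have e4 : 2 * α3 * Q3inf * A1inf / τA1 ^ 2 = -(2 * α3 * τC * Cinf / τA1) := by
    rw [hQ3inf, hA1inf]; field_simp
  refine ⟨?_, by linarith, by nlinarith, ?_⟩
  swap
  · have : 0 < 2 * α3 * τC * Cinf / τA1 := by positivity
    linarith
  ext x
  rw [spectrum.mem_iff, Matrix.isUnit_iff_isUnit_det, isUnit_iff_ne_zero, not_ne_iff,
    Matrix.det_fin_three]
  simp only [Matrix.sub_apply, Matrix.algebraMap_matrix_apply, Matrix.cons_val_zero,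
    Matrix.cons_val_one, Matrix.head_cons, Matrix.cons_val_two, Matrix.tail_cons,
    Matrix.cons_val_fin_one, Matrix.head_fin_const, Matrix.of_apply, Matrix.cons_val', Matrix.empty_val',
    Fin.isValue, Fin.ext_iff, Set.mem_insert_iff, Set.mem_singleton_iff]
  norm_num
  rw [e1, e2, e3, e4, show (x - (γ2 * 0 - f2inf)) * (x - -(γ3 * Cinf)) *
          (x - -(2 * α3 * τC * Cinf / τA1)) +
        (x - (γ2 * 0 - f2inf)) * (γ3 * Q3inf / τA1C) * (α3 * (1 - 1)) =
      (x - -f2inf) * ((x - -(γ3 * Cinf)) * (x - -(2 * α3 * τC * Cinf / τA1))) from by ring,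
    mul_eq_zero, mul_eq_zero, sub_eq_zero, sub_eq_zero, sub_eq_zero]
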